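/- For every subset S ⊆ A, the total disagreement of the dichotomous weak order O_S with the profile R equals Σ over ordered pairs (a,b) with a ∈ S and b ∈ A∖S of (2·N(b,a) + E(b,a)), plus Σ over unordered pairs {a,b} of distinct alternatives lying in the same class (both in S or both in A∖S) of (N(a,b) + N(b,a)). -/

import Mathlib

/-- Number of voters strictly preferring `a` to `b`. -/
def Nvot {α : Type} [Fintype α] [DecidableEq α] {n : ℕ}
    (R : Fin n → α → α → Bool) (a b : α) : ℕ :=
  (Finset.univ.filter (fun i : Fin n => R i a b ∧ ¬ R i b a)).card

/-- Number of voters indifferent between `a` and `b`. -/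
def Evot {α : Type} [Fintype α] [DecidableEq α] {n : ℕ}
    (R : Fin n → α → α → Bool) (a b : α) : ℕ :=
  (Finset.univ.filter (fun i : Fin n => R i a b ∧ R i b a)).card

/-- The dichotomous weak order with top class `S` contains `(a,b)` iff `a ∈ S ∨ b ∉ S`. -/
def OS {α : Type} [DecidableEq α] (S : Finset α) (a b : α) : Bool :=
  decide (a ∈ S ∨ b ∉ S)

/-- Total number of disagreements between the profile `R` and the dichotomous
weak order with top class `S`. -/
def totalDisagreement {α : Type} [Fintype α] [DecidableEq α] {n : ℕ}
    (R : Fin n → α → α → Bool) (S : Finset α) : ℕ :=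
  ∑ i : Fin n,
    ((Finset.univ : Finset (α × α)).filter
      (fun p => R i p.1 p.2 ≠ OS S p.1 p.2)).card

/-- Vertices of the network `G(R)`: a source, a sink, one node per alternative,
and one node per ordered pair of (distinct) alternatives. -/
inductive Vertex (α : Type) where
  | s : Vertex α
  | t : Vertex α
  | alt : α → Vertex α
  | pair : α → α → Vertex α

/-- `C` describes an s-t cut: `A* = {x | C x = true}`, `B* = {x | C x = false}`,
with `s ∈ A*` and `t ∈ B*`. -/
def IsCut {α : Type} (C : Vertex α → Bool) : Prop :=
  C .s = true ∧ C .t = false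

/-- A cut is consistent if each pair node `v_(a,b)` is on the same side as `a`. -/
def Consistent {α : Type} (C : Vertex α → Bool) : Prop :=
  ∀ a b : α, a ≠ b → C (.pair a b) = C (.alt a)

/-- The capacity of the cut described by `C`: the total weight of arcs going
from `A*` to `B*`, where for each ordered pair `(a,b)` of distinct alternatives
the arcs are `(s, v_(a,b))` of weight `N(a,b)`, `(v_(a,b), t)` of weight `N(b,a)`,
`(a, v_(a,b))` and `(v_(a,b), a)` of weight `L`, and `(a, b)` of weight `E(b,a)`. -/
def cutCapacity {α : Type} [Fintype α] [DecidableEq α] {n : ℕ}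
    (R : Fin n → α → α → Bool) (L : ℕ) (C : Vertex α → Bool) : ℕ :=
  ∑ p ∈ (Finset.univ : Finset (α × α)).filter (fun p => p.1 ≠ p.2),
    ((if C .s ∧ ¬ C (.pair p.1 p.2) then Nvot R p.1 p.2 else 0) +
     (if C (.pair p.1 p.2) ∧ ¬ C .t then Nvot R p.2 p.1 else 0) +
     (if C (.alt p.1) ∧ ¬ C (.pair p.1 p.2) then L else 0) +
     (if C (.pair p.1 p.2) ∧ ¬ C (.alt p.1) then L else 0) +
     (if C (.alt p.1) ∧ ¬ C (.alt p.2) then Evot R p.2 p.1 else 0))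

/-- The total weight of arcs of the pair gadget of `{a,b}` that go from `A*` to `B*`.
The gadget consists of the arcs `(s,v_(a,b))`, `(s,v_(b,a))`, `(v_(a,b),t)`,
`(v_(b,a),t)`, `(a,v_(a,b))`, `(v_(a,b),a)`, `(b,v_(b,a))`, `(v_(b,a),b)`,
`(a,b)` and `(b,a)`. -/
def gadgetCrossWeight {α : Type} [Fintype α] [DecidableEq α] {n : ℕ}
    (R : Fin n → α → α → Bool) (L : ℕ) (C : Vertex α → Bool) (a b : α) : ℕ :=
  (if C .s ∧ ¬ C (.pair a b) then Nvot R a b else 0) +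
  (if C .s ∧ ¬ C (.pair b a) then Nvot R b a else 0) +
  (if C (.pair a b) ∧ ¬ C .t then Nvot R b a else 0) +
  (if C (.pair b a) ∧ ¬ C .t then Nvot R a b else 0) +
  (if C (.alt a) ∧ ¬ C (.pair a b) then L else 0) +
  (if C (.pair a b) ∧ ¬ C (.alt a) then L else 0) +
  (if C (.alt b) ∧ ¬ C (.pair b a) then L else 0) +
  (if C (.pair b a) ∧ ¬ C (.alt b) then L else 0) +
  (if C (.alt a) ∧ ¬ C (.alt b) then Evot R b a else 0) +
  (if C (.alt b) ∧ ¬ C (.alt a) then Evot R a b else 0)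

/-- For every `S ⊆ A`, the total disagreement of the dichotomous
weak order `O_S` with the profile `R` equals the sum over ordered pairs `(a,b)`
with `a ∈ S`, `b ∉ S` of `2·N(b,a) + E(b,a)`, plus the sum over unordered pairs
of distinct alternatives lying in the same class of `N(a,b) + N(b,a)`. -/
theorem stmt0 {α : Type} [Fintype α] [DecidableEq α] {n : ℕ}
    (R : Fin n → α → α → Bool)
    (hrefl : ∀ (i : Fin n) (a : α), R i a a = true)
    (hcomp : ∀ (i : Fin n) (a b : α), R i a b = true ∨ R i b a = true)
    (S : Finset α) :
    totalDisagreement R S =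
      (∑ p ∈ (Finset.univ : Finset (α × α)).filter (fun p => p.1 ∈ S ∧ p.2 ∉ S),
        (2 * Nvot R p.2 p.1 + Evot R p.2 p.1)) +
      (∑ e ∈ (Finset.univ : Finset (Sym2 α)).filter (fun e => ¬ e.IsDiag ∧
            Sym2.lift ⟨fun a b => decide ((a ∈ S ∧ b ∈ S) ∨ (a ∉ S ∧ b ∉ S)),
              fun a b => by simp [and_comm, or_comm]⟩ e = true),
        Sym2.lift ⟨fun a b => Nvot R a b + Nvot R b a, fun a b => add_comm _ _⟩ e) := by
  classical
  set D : α × α → ℕ := fun p =>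
    (Finset.univ.filter (fun i : Fin n => R i p.1 p.2 ≠ OS S p.1 p.2)).card with hD
  -- total disagreement as a sum over pairs
  have htd : totalDisagreement R S = ∑ p : α × α, D p := by
    simp only [totalDisagreement, Finset.card_filter, hD]
    rw [Finset.sum_comm]
  have hdiag : ∀ p : α × α, p.1 = p.2 → D p = 0 := by
    rintro ⟨a, b⟩ h
    simp only at h; subst h
    simp only [hD, Finset.card_eq_zero, Finset.filter_eq_empty_iff]
    intro i _
    by_cases ha : a ∈ S <;> simp [OS, hrefl, ha]
  -- when OS is true, disagreements are strict reversals
  have hDtrue : ∀ p : α × α, OS S p.1 p.2 = true → D p = Nvot R p.2 p.1 := by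
    rintro ⟨a, b⟩ h
    simp only at h
    simp only [hD, Nvot]
    congr 1
    ext i
    simp only [Finset.mem_filter, Finset.mem_univ, true_and, h]
    constructor
    · intro hi
      have hab : R i a b = false := by
        cases hR : R i a b
        · rfl
        · exact absurd hR hi
      have hba : R i b a = true := by
        rcases hcomp i a b with h' | h'
        · rw [h'] at hab; exact absurd hab (by simp)
        · exact h'
      simp [hab, hba]
    · rintro ⟨h1, h2⟩
      simpa using h2
  -- when OS is false, disagreements are weak agreements
  have hDfalse : ∀ p : α × α, OS S p.1 p.2 = false →
      D p = Nvot R p.1 p.2 + Evot R p.1 p.2 := by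
    rintro ⟨a, b⟩ h
    simp only at h
    simp only [hD, Nvot, Evot, h, Finset.card_filter, ← Finset.sum_add_distrib]
    apply Finset.sum_congr rfl
    intro i _
    by_cases h1 : R i a b = true <;> by_cases h2 : R i b a = true <;>
      simp [h1, h2]
  -- the three regions
  have hOS1 : ∀ p : α × α, p.1 ∈ S → p.2 ∉ S → OS S p.1 p.2 = true := by
    rintro ⟨a, b⟩ ha hb; simp [OS, ha]
  have hOS2 : ∀ p : α × α, p.1 ∉ S → p.2 ∈ S → OS S p.1 p.2 = false := by
    rintro ⟨a, b⟩ ha hb; simp [OS, ha, hb]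
  have hOSsame : ∀ p : α × α,
      ((p.1 ∈ S ∧ p.2 ∈ S) ∨ (p.1 ∉ S ∧ p.2 ∉ S)) → OS S p.1 p.2 = true := by
    rintro ⟨a, b⟩ (⟨ha, hb⟩ | ⟨ha, hb⟩) <;> simp [OS, ha, hb]
  set q1 : α × α → Prop := fun p => p.1 ∈ S ∧ p.2 ∉ S with hq1
  set q2 : α × α → Prop := fun p => p.1 ∉ S ∧ p.2 ∈ S with hq2
  set qT : α × α → Prop := fun p => p.1 ≠ p.2 ∧
    ((p.1 ∈ S ∧ p.2 ∈ S) ∨ (p.1 ∉ S ∧ p.2 ∉ S)) with hqT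
  have hsplit : ∑ p : α × α, D p =
      (∑ p ∈ Finset.univ.filter q1, D p) + (∑ p ∈ Finset.univ.filter q2, D p) +
        (∑ p ∈ Finset.univ.filter qT, D p) := by
    rw [Finset.sum_filter, Finset.sum_filter, Finset.sum_filter,
      ← Finset.sum_add_distrib, ← Finset.sum_add_distrib]
    apply Finset.sum_congr rfl
    rintro ⟨a, b⟩ _
    by_cases h1 : a ∈ S <;> by_cases h2 : b ∈ S <;> by_cases h3 : a = b <;>
      simp_all [hq1, hq2, hqT, hdiag]
  -- evaluate D on each region
  have hs1 : ∑ p ∈ Finset.univ.filter q1, D p =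
      ∑ p ∈ Finset.univ.filter q1, Nvot R p.2 p.1 := by
    apply Finset.sum_congr rfl
    intro p hp
    simp only [Finset.mem_filter, hq1] at hp
    exact hDtrue p (hOS1 p hp.2.1 hp.2.2)
  have hs2 : ∑ p ∈ Finset.univ.filter q2, D p =
      ∑ p ∈ Finset.univ.filter q1, (Nvot R p.2 p.1 + Evot R p.2 p.1) := by
    rw [show (∑ p ∈ Finset.univ.filter q2, D p) =
        ∑ p ∈ Finset.univ.filter q2, (Nvot R p.1 p.2 + Evot R p.1 p.2) from
      Finset.sum_congr rfl fun p hp => by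
        simp only [Finset.mem_filter, hq2] at hp
        exact hDfalse p (hOS2 p hp.2.1 hp.2.2)]
    apply Finset.sum_nbij' (i := Prod.swap) (j := Prod.swap)
    · rintro ⟨a, b⟩ hp
      simp only [Finset.mem_filter, hq1, hq2, Prod.swap] at hp ⊢
      exact ⟨Finset.mem_univ _, hp.2.2, hp.2.1⟩
    · rintro ⟨a, b⟩ hp
      simp only [Finset.mem_filter, hq1, hq2, Prod.swap] at hp ⊢
      exact ⟨Finset.mem_univ _, hp.2.2, hp.2.1⟩
    · rintro ⟨a, b⟩ _; rfl
    · rintro ⟨a, b⟩ _; rfl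
    · rintro ⟨a, b⟩ _; rfl
  have hsT : ∑ p ∈ Finset.univ.filter qT, D p =
      ∑ p ∈ Finset.univ.filter qT, Nvot R p.2 p.1 := by
    apply Finset.sum_congr rfl
    intro p hp
    simp only [Finset.mem_filter, hqT] at hp
    exact hDtrue p (hOSsame p hp.2.2)
  -- convert the Sym2 sum to an ordered-pair sum
  have hsym : (∑ e ∈ (Finset.univ : Finset (Sym2 α)).filter (fun e => ¬ e.IsDiag ∧
        Sym2.lift ⟨fun a b => decide ((a ∈ S ∧ b ∈ S) ∨ (a ∉ S ∧ b ∉ S)),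
          fun a b => by simp [and_comm, or_comm]⟩ e = true),
        Sym2.lift ⟨fun a b => Nvot R a b + Nvot R b a, fun a b => add_comm _ _⟩ e) =
      ∑ p ∈ Finset.univ.filter qT, Nvot R p.2 p.1 := by
    rw [← Finset.sum_fiberwise_of_maps_to
      (g := fun p : α × α => Sym2.mk p.1 p.2)
      (t := (Finset.univ : Finset (Sym2 α)).filter (fun e => ¬ e.IsDiag ∧
        Sym2.lift ⟨fun a b => decide ((a ∈ S ∧ b ∈ S) ∨ (a ∉ S ∧ b ∉ S)),
          fun a b => by simp [and_comm, or_comm]⟩ e = true))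
      (fun p hp => by
        obtain ⟨a, b⟩ := p
        simp only [Finset.mem_filter, hqT] at hp
        simp only [Finset.mem_filter, Finset.mem_univ, true_and, Sym2.mk_isDiag_iff,
          Sym2.lift_mk, decide_eq_true_eq]
        exact ⟨hp.2.1, hp.2.2⟩)
      (fun p : α × α => Nvot R p.2 p.1)]
    apply Finset.sum_congr rfl
    intro e he
    induction e using Sym2.ind with
    | _ a b =>
      simp only [Finset.mem_filter, Finset.mem_univ, true_and, Sym2.mk_isDiag_iff,
        Sym2.lift_mk, decide_eq_true_eq] at he
      obtain ⟨hne, hsame⟩ := he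
      have hfib : (Finset.univ.filter qT).filter
          (fun p : α × α => Sym2.mk p.1 p.2 = Sym2.mk a b) = {(a, b), (b, a)} := by
        ext ⟨x, y⟩
        simp only [Finset.mem_filter, Finset.mem_univ, true_and, hqT,
          Finset.mem_insert, Finset.mem_singleton, Sym2.eq_iff, Prod.mk.injEq,
          Prod.ext_iff, Prod.swap]
        constructor
        · rintro ⟨-, h⟩
          rcases h with h | h
          · left; exact ⟨h.1, h.2⟩
          · right; exact ⟨h.1, h.2⟩
        · rintro (⟨hx, hy⟩ | ⟨hx, hy⟩) <;> subst hx <;> subst hy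
          · refine ⟨⟨hne, hsame⟩, Or.inl ⟨rfl, rfl⟩⟩
          · refine ⟨⟨fun h => hne h.symm, by tauto⟩, Or.inr ⟨rfl, rfl⟩⟩
      rw [hfib, Finset.sum_pair (fun h => hne (congrArg Prod.fst h))]
      simp [Sym2.lift_mk, add_comm]
  -- put everything together
  rw [htd, hsplit, hs1, hs2, hsT, hsym, ← Finset.sum_add_distrib]
  congr 1
  · apply Finset.sum_congr rfl
    intro p _
    ring
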